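/- Let k > 0, V > 0, and 0 < r_d ≤ r_a be real numbers. If r_a satisfies the circular-motion equilibrium equation V/r_a = 2·k·r_a·V·√(1 − r_d²/r_a²), then r_a = √((r_d² + √(r_d⁴ + 1/k²))/2). -/

import Mathlib

open Real

theorem stable_orbit_radius_formula (k V r_d r_a : ℝ)
    (hk : 0 < k) (hV : 0 < V) (hrd : 0 < r_d) (hle : r_d ≤ r_a)
    (heq : V / r_a = 2 * k * r_a * V * Real.sqrt (1 - r_d ^ 2 / r_a ^ 2)) :
    r_a = Real.sqrt ((r_d ^ 2 + Real.sqrt (r_d ^ 4 + 1 / k ^ 2)) / 2) := by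
  have hra : 0 < r_a := lt_of_lt_of_le hrd hle
  set s := Real.sqrt (1 - r_d ^ 2 / r_a ^ 2) with hs
  have hsnn : 0 ≤ s := Real.sqrt_nonneg _
  have harg : 0 ≤ 1 - r_d ^ 2 / r_a ^ 2 := by
    have : r_d ^ 2 ≤ r_a ^ 2 := by nlinarith
    have : r_d ^ 2 / r_a ^ 2 ≤ 1 := by
      rw [div_le_one (by positivity)]; exact this
    linarith
  have hs2 : s ^ 2 = 1 - r_d ^ 2 / r_a ^ 2 := Real.sq_sqrt harg
  -- cancel V
  have h1 : 1 / r_a = 2 * k * r_a * s := by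
    have hV' : V ≠ 0 := ne_of_gt hV
    field_simp at heq ⊢
    nlinarith [heq]
  -- s = 1/(2 k r_a^2)
  have hs' : s = 1 / (2 * k * r_a ^ 2) := by
    have hra' : r_a ≠ 0 := ne_of_gt hra
    field_simp at h1 ⊢
    nlinarith [h1]
  -- polynomial identity
  have hpoly : 4 * k ^ 2 * r_a ^ 4 - 4 * k ^ 2 * r_a ^ 2 * r_d ^ 2 - 1 = 0 := by
    have h2 : (1 / (2 * k * r_a ^ 2)) ^ 2 = 1 - r_d ^ 2 / r_a ^ 2 := by
      rw [← hs']; exact hs2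
    field_simp at h2
    have h3 : r_a ^ 2 * (4 * k ^ 2 * r_a ^ 4 - 4 * k ^ 2 * r_a ^ 2 * r_d ^ 2 - 1) = 0 := by
      linear_combination (-r_a ^ 2) * h2
    have := mul_eq_zero.mp h3
    rcases this with h | h
    · exact absurd h (by positivity)
    · exact h
  have hsqrt : Real.sqrt (r_d ^ 4 + 1 / k ^ 2) = 2 * r_a ^ 2 - r_d ^ 2 := by
    have hpos : 0 ≤ 2 * r_a ^ 2 - r_d ^ 2 := by nlinarith
    rw [show r_d ^ 4 + 1 / k ^ 2 = (2 * r_a ^ 2 - r_d ^ 2) ^ 2 by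
      field_simp; nlinarith [hpoly]]
    exact Real.sqrt_sq hpos
  rw [hsqrt]
  rw [show (r_d ^ 2 + (2 * r_a ^ 2 - r_d ^ 2)) / 2 = r_a ^ 2 by ring]
  exact (Real.sqrt_sq hra.le).symm
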